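/- arXiv:0903.5004 — 8 statements merged into one kernel-verified Lean document; each statement's English description precedes it below -/
import Mathlib

section
/- The algebras d₃ (with relations x² = 0, xθ = x, θx = 0, θ² = θ) and d₄ (with relations x² = 0, xθ = 0, θx = x, θ² = θ) on ℂ² are opposite algebras of each other, and they are not isomorphic as algebras. -/
/-- The underlying 2-dimensional complex vector space, with coordinates in the
basis `x = (1,0)`, `θ = (0,1)`. -/
abbrev V : Type := ℂ × ℂ

/-- A multiplication `V → V → V` is bilinear. -/
def IsBilin (m : V → V → V) : Prop :=
  (∀ a b c : V, m (a + b) c = m a c + m b c) ∧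
  (∀ (s : ℂ) (a b : V), m (s • a) b = s • m a b) ∧
  (∀ a b c : V, m a (b + c) = m a b + m a c) ∧
  (∀ (s : ℂ) (a b : V), m a (s • b) = s • m a b)

/-- Associativity of a multiplication. -/
def IsAssoc (m : V → V → V) : Prop :=
  ∀ a b c : V, m (m a b) c = m a (m b c)

/-- Two multiplications on `V` are isomorphic algebra structures. -/
def AlgIso (m m' : V → V → V) : Prop :=
  ∃ g : V ≃ₗ[ℂ] V, ∀ a b : V, m' a b = g.symm (m (g a) (g b))

/-- `d₁`: `x² = x`, `θ² = θ`, `xθ = θx = 0`. -/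
def mul1 (a b : V) : V := (a.1 * b.1, a.2 * b.2)
/-- `d₂`: `θ² = θ`, other products `0`. -/
def mul2 (a b : V) : V := (0, a.2 * b.2)
/-- `d₃`: `xθ = x`, `θ² = θ`, other products `0`. -/
def mul3 (a b : V) : V := (a.1 * b.2, a.2 * b.2)
/-- `d₄`: `θx = x`, `θ² = θ`, other products `0`. -/
def mul4 (a b : V) : V := (a.2 * b.1, a.2 * b.2)
/-- `d₅`: `xθ = θx = x`, `θ² = θ`, `x² = 0`. -/
def mul5 (a b : V) : V := (a.1 * b.2 + a.2 * b.1, a.2 * b.2)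
/-- `d₆`: `θ² = x`, other products `0`. -/
def mul6 (a b : V) : V := (a.2 * b.2, 0)

/-- The algebras `d₃` and `d₄` are opposite algebras of each other, and they are
not isomorphic. -/
theorem stmt5 :
    (∀ a b : V, mul4 a b = mul3 b a) ∧ ¬ AlgIso mul3 mul4 := by
  constructor
  · intro a b; simp [mul3, mul4, mul_comm]
  · rintro ⟨g, hg⟩
    have h := hg (1, 0) (g.symm (0, 1))
    rw [g.apply_symm_apply] at h
    have h2 : mul3 (g (1, 0)) ((0 : ℂ), (1 : ℂ)) = g (1, 0) := by
      simp [mul3]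
    rw [h2, g.symm_apply_apply] at h
    have : mul4 ((1 : ℂ), (0 : ℂ)) (g.symm (0, 1)) = (0, 0) := by
      simp [mul4]
    rw [this] at h
    exact one_ne_zero (congrArg Prod.fst h).symm
end

section
/- For the algebra A on ℂ² = span{x, θ} with x² = xθ = θx = 0, θ² = θ, the second Hochschild cohomology H²(A, A) is 1-dimensional over ℂ. -/
/-- Hochschild 2-cocycle condition for a bilinear map `φ` with respect to the
multiplication `mul`. -/
def IsCocycle2 (mul φ : V → V → V) : Prop :=
  ∀ a b c : V, mul a (φ b c) - φ (mul a b) c + φ a (mul b c) - mul (φ a b) c = 0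

/-- Hochschild 2-coboundary condition. -/
def IsCoboundary2 (mul φ : V → V → V) : Prop :=
  ∃ l : V →ₗ[ℂ] V, ∀ a b : V, φ a b = mul a (l b) - l (mul a b) + mul (l a) b

/-- For the algebra `d₂` (`x² = xθ = θx = 0`, `θ² = θ`), the second Hochschild
cohomology `H²(A,A)` is 1-dimensional over `ℂ`. -/
theorem stmt8 :
    ∃ φ : V → V → V, IsBilin φ ∧ IsCocycle2 mul2 φ ∧ ¬ IsCoboundary2 mul2 φ ∧
      ∀ ψ : V → V → V, IsBilin ψ → IsCocycle2 mul2 ψ →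
        ∃ c : ℂ, IsCoboundary2 mul2 (fun a b => ψ a b - c • φ a b) := by
  refine ⟨fun a b => (a.1 * b.1, 0), ?_, ?_, ?_, ?_⟩
  · refine ⟨?_, ?_, ?_, ?_⟩ <;> intros <;>
      simp [Prod.ext_iff, Prod.fst_add, Prod.smul_fst] <;> ring
  · intro a b c
    simp [mul2, Prod.ext_iff]
  · rintro ⟨l, hl⟩
    have h := congrArg Prod.fst (hl (1, 0) (1, 0))
    simp [mul2, Prod.mk_zero_zero, map_zero] at h
  · intro ψ hb hc
    obtain ⟨haddl, hsmull, haddr, hsmulr⟩ := hb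
    set e₁ : V := (1, 0) with he₁
    set e₂ : V := (0, 1) with he₂
    set P : V := ψ e₁ e₁ with hP
    set Q : V := ψ e₁ e₂ with hQ
    set R : V := ψ e₂ e₁ with hR
    set S : V := ψ e₂ e₂ with hS
    -- ψ vanishes when an argument is 0
    have hz_l : ∀ b : V, ψ 0 b = 0 := by
      intro b
      have := hsmull 0 0 b
      simpa using this
    have hz_r : ∀ a : V, ψ a 0 = 0 := by
      intro a
      have := hsmulr 0 a 0
      simpa using this
    -- expansion of ψ on the basis
    have expand : ∀ a b : V,
        ψ a b = a.1 • (b.1 • P + b.2 • Q) + a.2 • (b.1 • R + b.2 • S) := by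
      intro a b
      have ha : a = a.1 • e₁ + a.2 • e₂ := by
        simp [he₁, he₂, Prod.ext_iff]
      have hbb : b = b.1 • e₁ + b.2 • e₂ := by
        simp [he₁, he₂, Prod.ext_iff]
      calc ψ a b = ψ (a.1 • e₁ + a.2 • e₂) (b.1 • e₁ + b.2 • e₂) := by
            rw [← ha, ← hbb]
        _ = a.1 • (b.1 • P + b.2 • Q) + a.2 • (b.1 • R + b.2 • S) := by
            rw [haddl, hsmull, hsmull, haddr, haddr, hsmulr, hsmulr, hsmulr, hsmulr]
    -- mul2 on basis elements
    have m11 : mul2 e₁ e₁ = 0 := by simp [mul2, he₁, Prod.ext_iff]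
    have m12 : mul2 e₁ e₂ = 0 := by simp [mul2, he₁, he₂, Prod.ext_iff]
    have m21 : mul2 e₂ e₁ = 0 := by simp [mul2, he₁, he₂, Prod.ext_iff]
    have m22 : mul2 e₂ e₂ = e₂ := by simp [mul2, he₂, Prod.ext_iff]
    -- cocycle constraints
    have hP2 : P.2 = 0 := by
      have h := hc e₁ e₁ e₂
      rw [m11, m12, hz_l, hz_r] at h
      have h2 := congrArg Prod.snd h
      simp [mul2, he₁] at h2
      rcases h2 with h2 | h2
      · exact h2
      · simp [he₂] at h2
    have hQ1 : Q.1 = 0 := by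
      have h := hc e₁ e₂ e₂
      rw [m12, m22, hz_l] at h
      have h1 := congrArg Prod.fst h
      simp [mul2, he₁] at h1
      exact h1
    have hR1 : R.1 = 0 := by
      have h := hc e₂ e₂ e₁
      rw [m22, m21, hz_r] at h
      have h1 := congrArg Prod.fst h
      simp [mul2, he₁, he₂] at h1
      exact h1
    have hQR : Q.2 = R.2 := by
      have h := hc e₂ e₁ e₂
      rw [m21, m12, hz_l, hz_r] at h
      have h2 := congrArg Prod.snd h
      simp [mul2, he₂] at h2
      exact sub_eq_zero.mp h2
    refine ⟨P.1, ?_⟩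
    refine ⟨{ toFun := fun v => (-S.1 * v.2, Q.2 * v.1 + S.2 * v.2),
              map_add' := by intros; simp [Prod.ext_iff]; constructor <;> ring,
              map_smul' := by intros; simp [Prod.ext_iff]; constructor <;> ring }, ?_⟩
    intro a b
    beta_reduce
    rw [expand a b]
    refine Prod.ext ?_ ?_ <;>
      simp [mul2, hP2, hQ1, hR1, ← hQR] <;> ring
end

section
/- For the algebra A on ℂ² = span{x, θ} with x² = 0, xθ = x, θx = 0, θ² = θ, every Hochschild n-cocycle (n ≥ 1) with coefficients in A is a coboundary; in particular H¹(A,A) = H²(A,A) = 0, so A is rigid. -/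
open Finset in
/-- The sequence obtained from `a : Fin (n+1) → V` by multiplying the entries
in positions `i` and `i+1`. -/
noncomputable def mergeAt (mul : V → V → V) {n : ℕ} (a : Fin (n + 1) → V) (i : Fin n) :
    Fin n → V := fun j =>
  if (j : ℕ) < (i : ℕ) then a (Fin.castSucc j)
  else if (j : ℕ) = (i : ℕ) then mul (a (Fin.castSucc j)) (a j.succ)
  else a j.succ

open Finset in
/-- The Hochschild coboundary of an `n`-cochain (as a raw function). -/
noncomputable def hD (mul : V → V → V) (n : ℕ) (f : (Fin n → V) → V) :
    (Fin (n + 1) → V) → V := fun a =>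
  mul (a 0) (f fun j => a j.succ)
    + ∑ i : Fin n, ((-1 : ℂ) ^ ((i : ℕ) + 1)) • f (mergeAt mul a i)
    + ((-1 : ℂ) ^ (n + 1)) • mul (f fun j => a (Fin.castSucc j)) (a (Fin.last n))

/-- Hochschild `n`-cochains: multilinear maps `Vⁿ → V`. -/
abbrev Cochain (n : ℕ) := MultilinearMap ℂ (fun _ : Fin n => V) V

/-- An `n`-cochain is a Hochschild cocycle. -/
def IsCocycle (mul : V → V → V) {n : ℕ} (φ : Cochain n) : Prop :=
  ∀ a : Fin (n + 1) → V, hD mul n (⇑φ) a = 0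

/-- A function `Vⁿ⁺¹ → V` is a Hochschild coboundary. -/
def IsCoboundary (mul : V → V → V) (n : ℕ) (f : (Fin (n + 1) → V) → V) : Prop :=
  ∃ ψ : Cochain n, hD mul n (⇑ψ) = f

noncomputable section Stmt9Helper
open Finset

private def ee : V := ((0:ℂ), (1:ℂ))
private def xx : V := ((1:ℂ), (0:ℂ))
@[simp] private lemma ee_fst : ee.1 = 0 := rfl
@[simp] private lemma ee_snd : ee.2 = 1 := rfl
@[simp] private lemma xx_fst : xx.1 = 1 := rfl
@[simp] private lemma xx_snd : xx.2 = 0 := rfl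

private lemma mul3_eq (a b : V) : mul3 a b = b.2 • a := by
  refine Prod.ext ?_ ?_ <;> simp [mul3, mul_comm]

private lemma mergeAt_eq {k : ℕ} (a : Fin (k+1) → V) (i : Fin k) :
    mergeAt mul3 a i
      = Function.update (a ∘ Fin.succAbove i.succ) i ((a i.succ).2 • a i.castSucc) := by
  funext j
  rcases eq_or_ne j i with rfl | hne
  · simp [mergeAt, mul3_eq]
  · have hv : (j : ℕ) ≠ (i : ℕ) := fun h => hne (Fin.ext h)
    rw [Function.update_of_ne hne]
    rcases lt_or_gt_of_ne hv with h | h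
    · have hlt : Fin.castSucc j < i.succ := by
        simp only [Fin.lt_def, Fin.coe_castSucc, Fin.val_succ]; omega
      show (if (j:ℕ) < (i:ℕ) then _ else _) = _
      rw [if_pos h, Function.comp_apply, Fin.succAbove_of_castSucc_lt _ _ hlt]
    · have hle : i.succ ≤ Fin.castSucc j := by
        simp only [Fin.le_def, Fin.coe_castSucc, Fin.val_succ]; omega
      show (if (j:ℕ) < (i:ℕ) then _ else _) = _
      rw [if_neg (by omega), if_neg hv, Function.comp_apply,
        Fin.succAbove_of_le_castSucc _ _ hle]

private lemma map_mergeAt {k : ℕ} (ψ : Cochain k) (a : Fin (k+1) → V) (i : Fin k) :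
    ψ (mergeAt mul3 a i) = (a i.succ).2 • ψ (a ∘ Fin.succAbove i.succ) := by
  rw [mergeAt_eq, ψ.map_update_smul]
  congr 1
  rw [show a i.castSucc = (a ∘ Fin.succAbove i.succ) i by
    simp [Function.comp, Fin.succAbove_of_castSucc_lt _ _ (Fin.castSucc_lt_succ : i.castSucc < i.succ)]]
  exact congrArg _ (Function.update_eq_self i _)

private lemma tail_apply {N : ℕ} (w : Fin (N+1) → V) (q : Fin N) : Fin.tail w q = w q.succ := rfl

private lemma tail_eq {N : ℕ} (w : Fin (N+1) → V) : (fun l => w l.succ) = Fin.tail w := rfl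

noncomputable def hE {k : ℕ} (f : (Fin (k+1) → V) → V) (a : Fin (k+2) → V) : V :=
  (f (Fin.tail a)).2 • a 0 +
    ∑ j : Fin k, ((-1 : ℂ) ^ ((j : ℕ) + 1)) •
      ((a (j.castSucc.succ)).2 • f (fun l => a (Fin.succAbove j.castSucc.succ l)))

private lemma hD_eq_hE {k : ℕ} (ψ : Cochain (k+1)) (a : Fin (k+2) → V) :
    hD mul3 (k+1) (⇑ψ) a = hE (⇑ψ) a := by
  unfold hD hE
  rw [Fin.sum_univ_castSucc]
  simp only [map_mergeAt, mul3_eq, Function.comp_def, Fin.succ_last, Fin.succAbove_last,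
    Fin.coe_castSucc, Fin.val_last, tail_eq]
  rw [show ((-1 : ℂ) ^ (k + 1 + 1)) = -((-1 : ℂ)^(k+1)) from by ring]
  rw [neg_smul]
  abel

private lemma comp_succAbove {N : ℕ} (w : Fin (N+2) → V) (p : Fin (N+1)) :
    (fun l => w (Fin.succAbove p.succ l))
      = Fin.cons (w 0) (fun l => w (Fin.succAbove p l).succ) := by
  funext l
  induction l using Fin.cases with
  | zero => simp
  | succ q => simp

private lemma cons_self {N : ℕ} (w : Fin (N+1) → V) :
    Fin.cons (w 0) (fun l => w l.succ) = w :=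
  funext fun l => Fin.cases rfl (fun _ => rfl) l

def PX : V →ₗ[ℂ] V := LinearMap.smulRight (-(LinearMap.fst ℂ ℂ ℂ)) xx
def QX : V →ₗ[ℂ] V := LinearMap.smulRight (LinearMap.snd ℂ ℂ ℂ) xx
def RE : V →ₗ[ℂ] V := LinearMap.smulRight (LinearMap.snd ℂ ℂ ℂ) ee

def L1 (m : ℕ) (φ : Cochain (m+2)) : V →ₗ[ℂ] Cochain m where
  toFun u := (φ.curryLeft u).curryLeft ee
  map_add' u v := MultilinearMap.ext fun c => by
    show φ (Fin.cons (u+v) (Fin.cons ee c))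
      = φ (Fin.cons u (Fin.cons ee c)) + φ (Fin.cons v (Fin.cons ee c))
    rw [MultilinearMap.cons_add]
  map_smul' s u := MultilinearMap.ext fun c => by
    show φ (Fin.cons (s • u) (Fin.cons ee c)) = s • φ (Fin.cons u (Fin.cons ee c))
    rw [MultilinearMap.cons_smul]

def L2 (m : ℕ) (φ : Cochain (m+2)) : V →ₗ[ℂ] Cochain m :=
  LinearMap.smulRight (LinearMap.fst ℂ ℂ ℂ) ((φ.curryLeft ee).curryLeft ee)

def psiS (m : ℕ) (φ : Cochain (m+2)) : Cochain (m+1) :=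
  PX.compMultilinearMap (L1 m φ).uncurryLeft
    + QX.compMultilinearMap (L2 m φ).uncurryLeft
    + RE.compMultilinearMap (φ.curryLeft ee)

lemma psiS_apply (m : ℕ) (φ : Cochain (m+2)) (c : Fin (m+1) → V) :
    psiS m φ c
      = (-(φ (Fin.cons (c 0) (Fin.cons ee (fun j => c j.succ)))).1
          + (c 0).1 * (φ (Fin.cons ee (Fin.cons ee (fun j => c j.succ)))).2) • xx
        + (φ (Fin.cons ee c)).2 • ee := by
  have h1 : ((L1 m φ).uncurryLeft : Cochain (m+1)) c
      = φ (Fin.cons (c 0) (Fin.cons ee (fun j => c j.succ))) := rfl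
  have h2 : ((L2 m φ).uncurryLeft : Cochain (m+1)) c
      = (c 0).1 • φ (Fin.cons ee (Fin.cons ee (fun j => c j.succ))) := rfl
  have h3 : (φ.curryLeft ee) c = φ (Fin.cons ee c) := rfl
  simp [psiS, PX, QX, RE, h1, h2, h3, add_smul, neg_smul, smul_smul, mul_comm]

end Stmt9Helper

noncomputable section Stmt9Main
open Finset



private lemma hE0 (f : (Fin 1 → V) → V) (b : Fin 2 → V) :
    hE f b = (f (Fin.tail b)).2 • b 0 := by
  simp [hE]

private lemma vdecomp (u : V) : u = u.1 • xx + u.2 • ee := by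
  refine Prod.ext ?_ ?_ <;> simp

private lemma case0 (φ : Cochain 1) (hφ : IsCocycle mul3 φ) : IsCoboundary mul3 0 ⇑φ := by
  have key : ∀ b : Fin 2 → V, (φ (Fin.tail b)).2 • b 0 = 0 := fun b => by
    rw [← hE0, ← hD_eq_hE]; exact hφ b
  have h2 : ∀ u : V, (φ (fun _ => u)).2 = 0 := by
    intro u
    have h := congrArg Prod.fst (key (Fin.cons ((1:ℂ),(1:ℂ)) (fun _ => u)))
    simpa using h
  have hu : ∀ u : V, φ (fun _ => u) = u.1 • φ (fun _ => xx) + u.2 • φ (fun _ => ee) := by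
    intro u
    have h0 : (fun _ : Fin 1 => u)
        = Function.update (fun _ : Fin 1 => u) 0 (u.1 • xx + u.2 • ee) := by
      funext j
      rw [show j = 0 from Fin.ext (by omega)]
      simp [← vdecomp u]
    have e1 : Function.update (fun _ : Fin 1 => u) 0 xx = fun _ : Fin 1 => xx :=
      funext fun j => by rw [show j = 0 from Fin.ext (by omega)]; simp
    have e2 : Function.update (fun _ : Fin 1 => u) 0 ee = fun _ : Fin 1 => ee :=
      funext fun j => by rw [show j = 0 from Fin.ext (by omega)]; simp
    rw [h0, φ.map_update_add, φ.map_update_smul, φ.map_update_smul, e1, e2]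
  refine ⟨MultilinearMap.constOfIsEmpty ℂ _ ((-(φ (fun _ => ee)).1, (φ (fun _ => xx)).1) : V),
    funext fun a => ?_⟩
  have ha : a = fun _ => a 0 := funext fun j => by rw [show j = 0 from Fin.ext (by omega)]
  unfold hD
  simp only [MultilinearMap.constOfIsEmpty_apply, Finset.univ_eq_empty, Finset.sum_empty,
    add_zero, pow_one, neg_one_smul, mul3_eq]
  rw [ha, hu (a 0)]
  have hx2 := h2 xx
  have he2 := h2 ee
  refine Prod.ext ?_ ?_ <;>
    simp [Prod.smul_fst, Prod.smul_snd, hx2, he2, smul_eq_mul] <;> ring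

private lemma scalar1 {m : ℕ} (A B L : Fin m → ℂ) (P R2 u1 : ℂ)
    (h2 : R2 * u1 + (-P + ∑ x : Fin m, (-1:ℂ)^((x:ℕ)+1+1) * (L x * A x)) = 0)
    (h3 : R2 + (-R2 + ∑ x : Fin m, (-1:ℂ)^((x:ℕ)+1+1) * (L x * B x)) = 0) :
    R2 * u1 + ∑ x : Fin m, (-1:ℂ)^((x:ℕ)+1) * (L x * (-(A x) + u1 * B x)) = P := by
  have e1 : ∑ x : Fin m, (-1:ℂ)^((x:ℕ)+1) * (L x * (-(A x) + u1 * B x))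
      = (∑ x : Fin m, (-1:ℂ)^((x:ℕ)+1+1) * (L x * A x))
        - u1 * ∑ x : Fin m, (-1:ℂ)^((x:ℕ)+1+1) * (L x * B x) := by
    rw [Finset.mul_sum, ← Finset.sum_sub_distrib]
    exact Finset.sum_congr rfl fun x _ => by ring
  rw [e1]; linear_combination h2 - u1 * h3

private lemma scalar2 {m : ℕ} (C L : Fin m → ℂ) (Q R2 u2 : ℂ)
    (h1 : Q + (-(u2 * R2) + ∑ x : Fin m, (-1:ℂ)^((x:ℕ)+1+1) * (L x * C x)) = 0) :
    R2 * u2 + ∑ x : Fin m, (-1:ℂ)^((x:ℕ)+1) * (L x * C x) = Q := by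
  have e1 : ∑ x : Fin m, (-1:ℂ)^((x:ℕ)+1) * (L x * C x)
      = -∑ x : Fin m, (-1:ℂ)^((x:ℕ)+1+1) * (L x * C x) := by
    rw [← Finset.sum_neg_distrib]
    exact Finset.sum_congr rfl fun x _ => by ring
  rw [e1]; linear_combination -h1


private lemma caseS (m : ℕ) (φ : Cochain (m+2)) (hφ : IsCocycle mul3 φ) :
    IsCoboundary mul3 (m+1) ⇑φ := by
  refine ⟨psiS m φ, funext fun a => ?_⟩
  rw [hD_eq_hE]
  have key : ∀ b : Fin (m+3) → V, hE (⇑φ) b = 0 := fun b => by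
    rw [← hD_eq_hE]; exact hφ b
  have H1 := key (Fin.cons ee a)
  have H2 := key (Fin.cons (a 0) (Fin.cons ee (Fin.tail a)))
  have H3 := key (Fin.cons ee (Fin.cons ee (Fin.tail a)))
  unfold hE at H1 H2 H3 ⊢
  simp only [Fin.cons_succ, Fin.cons_zero, ← Fin.succ_castSucc, comp_succAbove,
    Fin.sum_univ_succ, Fin.castSucc_zero, Fin.zero_succAbove, Fin.val_succ, Fin.val_zero,
    Fin.tail_cons, tail_apply, tail_eq, Fin.cons_self_tail, cons_self, pow_one, pow_zero,
    neg_smul, one_smul, ee_snd, one_mul, mul_one, psiS_apply] at H1 H2 H3 ⊢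
  have H1s := congrArg Prod.snd H1
  have H2f := congrArg Prod.fst H2
  have H3s := congrArg Prod.snd H3
  refine Prod.ext ?_ ?_ <;>
  simp only [Prod.fst_add, Prod.snd_add, Prod.fst_sum, Prod.snd_sum, Prod.smul_fst,
    Prod.smul_snd, smul_eq_mul, ee_fst, ee_snd, xx_fst, xx_snd, mul_zero, mul_one,
    add_zero, zero_add, Prod.fst_zero, Prod.snd_zero, pow_one, pow_zero, one_mul,
    mul_neg, neg_mul, neg_neg, neg_zero] at H1s H2f H3s ⊢
  · exact scalar1 _ _ _ _ _ _ H2f H3s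
  · exact scalar2 _ _ _ _ _ H1s

end Stmt9Main

/-- For the algebra `d₃` (`x² = 0`, `xθ = x`, `θx = 0`, `θ² = θ`), every
Hochschild `n`-cocycle with `n ≥ 1` is a coboundary; in particular
`H¹ = H² = 0` and the algebra is rigid. -/
theorem stmt9 :
    ∀ n : ℕ, ∀ φ : Cochain (n + 1),
      IsCocycle mul3 φ → IsCoboundary mul3 n (⇑φ) := by
  intro n φ hφ
  match n, φ, hφ with
  | 0, φ, hφ => exact case0 φ hφ
  | (m+1), φ, hφ => exact caseS m φ hφ
end

section
/- For the unital algebra A on ℂ² = span{x, θ} with x² = 0, xθ = θx = x, θ² = θ, the second Hochschild cohomology H²(A,A) is 1-dimensional, spanned by the class of the 2-cochain φ with φ(x,x) = θ and φ vanishing on the other basis pairs. -/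
/-- The 2-cochain with `φ(x,x) = θ` and `φ` vanishing on the other basis
pairs. -/
def phi11 (a b : V) : V := ((0 : ℂ), a.1 * b.1)

/-- For the unital algebra `d₅` (`x² = 0`, `xθ = θx = x`, `θ² = θ`),
`H²(A,A)` is 1-dimensional, spanned by the class of `φ` with `φ(x,x) = θ`,
zero on other basis pairs. -/
theorem stmt11 :
    IsCocycle2 mul5 phi11 ∧ ¬ IsCoboundary2 mul5 phi11 ∧
      ∀ ψ : V → V → V, IsBilin ψ → IsCocycle2 mul5 ψ →
        ∃ c : ℂ, IsCoboundary2 mul5 (fun a b => ψ a b - c • phi11 a b) := by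
  refine ⟨?_, ?_, ?_⟩
  · intro a b c
    refine Prod.ext ?_ ?_ <;> simp [mul5, phi11] <;> ring
  · rintro ⟨l, h⟩
    have h1 := congrArg Prod.snd (h (1, 0) (1, 0))
    have h0 : mul5 ((1 : ℂ), (0 : ℂ)) ((1 : ℂ), (0 : ℂ)) = (0 : V) := by
      simp [mul5, Prod.ext_iff]
    rw [h0] at h1
    simp [phi11, mul5] at h1
  · intro ψ hb hc
    obtain ⟨hadd₁, hsmul₁, hadd₂, hsmul₂⟩ := hb
    have hexp : ∀ a b : V, ψ a b =
        (a.1 * b.1) • ψ (1, 0) (1, 0) + (a.1 * b.2) • ψ (1, 0) (0, 1) +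
        (a.2 * b.1) • ψ (0, 1) (1, 0) + (a.2 * b.2) • ψ (0, 1) (0, 1) := by
      intro a b
      have ha : a = a.1 • ((1, 0) : V) + a.2 • ((0, 1) : V) := by
        refine Prod.ext ?_ ?_ <;> simp
      have hb' : b = b.1 • ((1, 0) : V) + b.2 • ((0, 1) : V) := by
        refine Prod.ext ?_ ?_ <;> simp
      conv_lhs => rw [ha, hb']
      rw [hadd₁, hsmul₁, hsmul₁, hadd₂, hadd₂, hsmul₂, hsmul₂, hsmul₂, hsmul₂]
      module
    have E1 := hc (1, 0) (0, 1) (0, 1)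
    have E2 := hc (0, 1) (0, 1) (1, 0)
    have hq1 : (ψ (1, 0) (0, 1)).1 = (ψ (0, 1) (0, 1)).2 := by
      have := congrArg Prod.fst E1
      simp [mul5] at this
      linear_combination -this
    have hq2 : (ψ (1, 0) (0, 1)).2 = 0 := by
      have := congrArg Prod.snd E1
      simp [mul5] at this
      linear_combination this
    have hr1 : (ψ (0, 1) (1, 0)).1 = (ψ (0, 1) (0, 1)).2 := by
      have := congrArg Prod.fst E2
      simp [mul5] at this
      linear_combination this
    have hr2 : (ψ (0, 1) (1, 0)).2 = 0 := by
      have := congrArg Prod.snd E2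
      simp [mul5] at this
      linear_combination this
    refine ⟨(ψ (1, 0) (1, 0)).2, ?_⟩
    refine ⟨{ toFun := fun a => (a.2 * (ψ (0, 1) (0, 1)).1,
                a.1 * ((ψ (1, 0) (1, 0)).1 / 2) + a.2 * (ψ (0, 1) (0, 1)).2),
              map_add' := ?_, map_smul' := ?_ }, ?_⟩
    · intro a b; refine Prod.ext ?_ ?_ <;> simp <;> ring
    · intro m a; refine Prod.ext ?_ ?_ <;> simp <;> ring
    · intro a b
      simp only [LinearMap.coe_mk, AddHom.coe_mk]
      rw [hexp a b]
      refine Prod.ext ?_ ?_ <;>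
        simp [mul5, phi11] <;>
        first
          | linear_combination a.1 * b.2 * (hq1 + hq2) + a.2 * b.1 * (hr1 + hr2)
          | linear_combination a.1 * b.2 * hq1 + a.2 * b.1 * hr1
          | linear_combination a.1 * b.2 * (hq2 - hq1) + a.2 * b.1 * (hr2 - hr1)
          | linear_combination a.1 * b.2 * hq2 + a.2 * b.1 * hr2
end

section
/- For the algebra A on ℂ² = span{x, θ} with θ² = x and all other products zero, the two 2-cochains φ₁ and φ₂, where φ₁(θ,x) = φ₁(x,θ) = x, φ₁ = 0 otherwise, and φ₂(θ,x) = φ₂(x,θ) = θ, φ₂(x,x) = x, φ₂ = 0 otherwise, are Hochschild 2-cocycles whose cohomology classes are linearly independent in H²(A,A). -/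
/-- `φ₁(θ,x) = φ₁(x,θ) = x`, zero otherwise on basis pairs. -/
def phi13a (a b : V) : V := (a.1 * b.2 + a.2 * b.1, 0)

/-- `φ₂(θ,x) = φ₂(x,θ) = θ`, `φ₂(x,x) = x`, zero otherwise on basis pairs. -/
def phi13b (a b : V) : V := (a.1 * b.1, a.1 * b.2 + a.2 * b.1)

/-- For the nilpotent algebra `d₆`, the 2-cochains `φ₁` and `φ₂` are Hochschild
2-cocycles whose classes are linearly independent in `H²(A,A)`. -/
theorem stmt13 :
    IsCocycle2 mul6 phi13a ∧ IsCocycle2 mul6 phi13b ∧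
      ∀ c₁ c₂ : ℂ,
        IsCoboundary2 mul6 (fun a b => c₁ • phi13a a b + c₂ • phi13b a b) →
          c₁ = 0 ∧ c₂ = 0 := by
  refine ⟨?_, ?_, ?_⟩
  · intro a b c
    simp only [mul6, phi13a, Prod.ext_iff, Prod.fst_sub, Prod.snd_sub, Prod.fst_add,
      Prod.snd_add, Prod.fst_zero, Prod.snd_zero]
    constructor <;> ring
  · intro a b c
    simp only [mul6, phi13b, Prod.ext_iff, Prod.fst_sub, Prod.snd_sub, Prod.fst_add,
      Prod.snd_add, Prod.fst_zero, Prod.snd_zero]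
    constructor <;> ring
  · rintro c₁ c₂ ⟨l, h⟩
    have hz : mul6 ((1:ℂ),(0:ℂ)) ((0:ℂ),(1:ℂ)) = (0 : V) := by
      simp [mul6, Prod.ext_iff]
    have h1 := h ((0:ℂ),(1:ℂ)) ((0:ℂ),(1:ℂ))
    have h2 := h ((1:ℂ),(0:ℂ)) ((0:ℂ),(1:ℂ))
    simp only [phi13a, phi13b, mul6, hz, map_zero, Prod.ext_iff, Prod.smul_mk,
      Prod.fst_add, Prod.snd_add, Prod.fst_sub, Prod.snd_sub, Prod.fst_zero,
      Prod.snd_zero, smul_eq_mul] at h1 h2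
    -- h1 second component gives (l (1,0)).2 = 0; h2 gives c₁ = ..., c₂ = 0
    obtain ⟨h1a, h1b⟩ := h1
    obtain ⟨h2a, h2b⟩ := h2
    have h00 : l ((0:ℂ),(0:ℂ)) = 0 := map_zero l
    norm_num [h00] at h1a h1b h2a h2b
    constructor
    · exact h2a.trans h1b
    · exact h2b
end

section
/- The family of multiplications m_t on ℂ² = span{x, θ} defined by x·x = t·x, x·θ = θ·x = 0, θ·θ = θ is associative for every t ∈ ℂ, and for every t ≠ 0 the algebra (ℂ², m_t) is isomorphic to ℂ × ℂ. -/
/-- The deformed multiplication `m_t`: `x·x = t·x`, `x·θ = θ·x = 0`,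
`θ·θ = θ`. -/
def mulT15 (t : ℂ) (a b : V) : V := (t * a.1 * b.1, a.2 * b.2)

/-- The family `m_t` is associative for every `t`, and for `t ≠ 0` the algebra
`(ℂ², m_t)` is isomorphic to `ℂ × ℂ`. -/
theorem stmt15 :
    (∀ t : ℂ, ∀ a b c : V, mulT15 t (mulT15 t a b) c = mulT15 t a (mulT15 t b c)) ∧
    (∀ t : ℂ, t ≠ 0 →
      ∃ g : V ≃ₗ[ℂ] ℂ × ℂ, ∀ a b : V, g (mulT15 t a b) = g a * g b) := by
  constructor
  · intro t a b c
    simp only [mulT15, Prod.mk.injEq]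
    constructor <;> ring
  · intro t ht
    refine ⟨(LinearEquiv.smulOfNeZero ℂ ℂ t ht).prodCongr (LinearEquiv.refl ℂ ℂ), ?_⟩
    intro a b
    simp only [mulT15, LinearEquiv.prodCongr_apply, LinearEquiv.smulOfNeZero,
      LinearEquiv.smulOfUnit, DistribMulAction.toLinearEquiv, LinearEquiv.coe_mk,
      LinearEquiv.refl_apply, Prod.mk_mul_mk, smul_eq_mul,
      DistribMulAction.toAddEquiv, Units.smul_mk0]
    exact Prod.ext (by show t * (t * a.1 * b.1) = t * a.1 * (t * b.1); ring) rfl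
end

section
/- The family of multiplications m_t on ℂ² = span{x, θ} defined by x·x = t·θ, x·θ = θ·x = x, θ·θ = θ is associative for every t ∈ ℂ, and for every t ≠ 0 the algebra (ℂ², m_t) is isomorphic to ℂ × ℂ. -/
/-- The deformed multiplication `m_t`: `x·x = t·θ`, `x·θ = θ·x = x`,
`θ·θ = θ`. -/
def mulT16 (t : ℂ) (a b : V) : V :=
  (a.1 * b.2 + a.2 * b.1, t * a.1 * b.1 + a.2 * b.2)

/-- The isomorphism as a linear equivalence, for `s ≠ 0` (with `s² = t`). -/
noncomputable def gIso (s : ℂ) (hs : s ≠ 0) : V ≃ₗ[ℂ] ℂ × ℂ where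
  toFun a := (a.2 + s * a.1, a.2 - s * a.1)
  invFun b := ((b.1 - b.2) / (2 * s), (b.1 + b.2) / 2)
  map_add' a b := by simp only [Prod.ext_iff, Prod.fst_add, Prod.snd_add, Prod.mk_add_mk]
                     constructor <;> ring
  map_smul' c a := by simp only [Prod.ext_iff, Prod.smul_fst, Prod.smul_snd, Prod.smul_mk,
                        smul_eq_mul, RingHom.id_apply]
                      constructor <;> ring
  left_inv a := by
    simp only [Prod.ext_iff]
    constructor <;> field_simp <;> ring
  right_inv b := by
    simp only [Prod.ext_iff]
    constructor <;> field_simp <;> ring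

/-- The family `m_t` is associative for every `t`, and for `t ≠ 0` the algebra
`(ℂ², m_t)` is isomorphic to `ℂ × ℂ`. -/
theorem stmt16 :
    (∀ t : ℂ, ∀ a b c : V, mulT16 t (mulT16 t a b) c = mulT16 t a (mulT16 t b c)) ∧
    (∀ t : ℂ, t ≠ 0 →
      ∃ g : V ≃ₗ[ℂ] ℂ × ℂ, ∀ a b : V, g (mulT16 t a b) = g a * g b) := by
  constructor
  · intro t a b c
    simp only [mulT16, Prod.ext_iff]
    constructor <;> ring
  · intro t ht
    obtain ⟨s, hs⟩ : ∃ s : ℂ, s ^ 2 = t := ⟨t ^ (((2:ℕ):ℂ)⁻¹), by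
      have := Complex.cpow_nat_inv_pow t (two_ne_zero)
      exact_mod_cast this⟩
    have hsne : s ≠ 0 := by rintro rfl; simp at hs; exact ht hs.symm
    refine ⟨gIso s hsne, fun a b => ?_⟩
    simp only [gIso, mulT16, LinearEquiv.coe_mk, LinearMap.coe_mk, AddHom.coe_mk, Prod.mk_mul_mk, Prod.ext_iff]
    subst hs
    constructor <;> ring
end

section
/- There is no family of associative multiplications m_t on ℂ² with m_0 equal to the multiplication of the algebra d₃ (x² = 0, xθ = x, θx = 0, θ² = θ) such that m_t is non-isomorphic to m_0 to first order; more precisely, every infinitesimal deformation m_0 + tφ of d₃ (associative mod t²) is equivalent to the trivial one via an infinitesimal automorphism. -/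
/-- Every infinitesimal deformation of `d₃` (`x² = 0`, `xθ = x`, `θx = 0`,
`θ² = θ`) is trivial: every Hochschild 2-cocycle is a coboundary, i.e.
`H²(d₃) = 0`. -/
theorem stmt17 :
    ∀ φ : V → V → V, IsBilin φ → IsCocycle2 mul3 φ → IsCoboundary2 mul3 φ := by
  intro φ ⟨hL, hLs, hRadd, hRs⟩ hc
  set e1 : V := ((1:ℂ), (0:ℂ)) with he1
  set e2 : V := ((0:ℂ), (1:ℂ)) with he2
  -- φ vanishes when an argument is 0
  have hz2 : ∀ a : V, φ a 0 = 0 := by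
    intro a
    have := hRs 0 a 0
    simpa using this
  have hz1 : ∀ b : V, φ 0 b = 0 := by
    intro b
    have := hLs 0 0 b
    simpa using this
  -- products of basis elements
  have m11 : mul3 e1 e1 = 0 := by simp [mul3, he1, Prod.ext_iff]
  have m12 : mul3 e1 e2 = e1 := by simp [mul3, he1, he2, Prod.ext_iff]
  have m21 : mul3 e2 e1 = 0 := by simp [mul3, he1, he2, Prod.ext_iff]
  have m22 : mul3 e2 e2 = e2 := by simp [mul3, he2, Prod.ext_iff]
  set α : ℂ := (φ e1 e1).1 with hα
  set β : ℂ := (φ e1 e2).1 with hβ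
  -- cocycle equations on basis
  have c111 := hc e1 e1 e1
  have c112 := hc e1 e1 e2
  have c121 := hc e1 e2 e1
  have c122 := hc e1 e2 e2
  have c221 := hc e2 e2 e1
  have c222 := hc e2 e2 e2
  simp only [m11, m12, m21, m22, hz1, hz2] at c111 c112 c121 c122 c221 c222
  -- extract component equations
  have hP : φ e1 e1 = (α, 0) := by
    have h2 : (φ e1 e1).2 = 0 := by
      have := congrArg Prod.fst c111
      simpa [mul3, he1] using this
    exact Prod.ext rfl h2
  have hQ : φ e1 e2 = (β, 0) := by
    have h2 : (φ e1 e2).2 = 0 := by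
      have := congrArg Prod.fst c112
      simpa [mul3, he1, he2, hP] using this
    exact Prod.ext rfl h2
  have hR : φ e2 e1 = (0, α) := by
    have h1 : (φ e2 e1).1 = 0 := by
      have := congrArg Prod.fst c221
      simpa [mul3, he1, he2] using this
    have h2 : (φ e2 e1).2 = α := by
      have := congrArg Prod.fst c121
      have := sub_eq_zero.mp (by simpa [mul3, he1, hα] using this)
      simpa using this
    exact Prod.ext h1 h2
  have hS : φ e2 e2 = (0, β) := by
    have h1 : (φ e2 e2).1 = 0 := by
      have := congrArg Prod.fst c222
      simpa [mul3, he2] using this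
    have h2 : (φ e2 e2).2 = β := by
      have := congrArg Prod.fst c122
      have := sub_eq_zero.mp (by simpa [mul3, he1, he2, hβ] using this)
      simpa [he1, he2, hβ] using this
    exact Prod.ext h1 h2
  -- bilinear decomposition
  have hdec : ∀ a : V, a = a.1 • e1 + a.2 • e2 := by
    intro a
    simp [he1, he2, Prod.ext_iff]
  have hφ : ∀ a b : V, φ a b
      = (a.1 * b.1) • φ e1 e1 + (a.1 * b.2) • φ e1 e2
      + (a.2 * b.1) • φ e2 e1 + (a.2 * b.2) • φ e2 e2 := by
    intro a b
    conv_lhs => rw [hdec a, hdec b]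
    simp only [hL, hRadd, hLs, hRs, smul_smul]
    abel
  -- the linear map
  refine ⟨{ toFun := fun p => (0, p.1 * α + p.2 * β),
            map_add' := by intro p q; simp [Prod.ext_iff]; ring,
            map_smul' := by intro s p; simp [Prod.ext_iff, Prod.smul_def]; ring }, ?_⟩
  intro a b
  rw [hφ a b, hP, hQ, hR, hS]
  simp only [LinearMap.coe_mk, AddHom.coe_mk, mul3, Prod.ext_iff, Prod.smul_def,
    smul_eq_mul, Prod.fst_add, Prod.snd_add, Prod.fst_sub, Prod.snd_sub,
    Prod.mk.injEq]
  constructor <;> ring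
end
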